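/- Let G = (V,E) be a distributed computing network and let s,t ∈ V. In the layered graph of G, assign to each of the two copies (u,v) and (u',v') of a link the cost μ_{uv}, and to each crossing edge (w,w') the cost μ_w. Let C be a minimum-cost set of edges of the layered graph whose removal disconnects s from t'. Then the pair (E_c, V_c) with E_c = {(u,v) ∈ E : (u,v) ∈ C or (u',v') ∈ C} and V_c = {w ∈ V : (w,w') ∈ C} is a joint communication and computation cut for (s,t), and its value Σ_{(u,v)∈E_c} μ_{uv} + Σ_{w∈V_c} μ_w is at most twice the minimum value over all joint communication and computation cuts for (s,t). -/

import Mathlib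

open Finset

variable {V : Type} [Fintype V] [DecidableEq V]

/-- A computation path from `s` to `t` in the directed graph with link set `E`:
a directed walk (a nonempty list of nodes whose consecutive pairs are links of `E`)
starting at `s` and ending at `t`, together with a designated processing node `proc`
lying on the walk. -/
structure CompPath (E : Finset (V × V)) (s t : V) : Type where
  walk : List V
  proc : V
  walk_ne : walk ≠ []
  head_eq : walk.head? = some s
  last_eq : walk.getLast? = some t
  chain : walk.Chain' fun u v => (u, v) ∈ E
  proc_mem : proc ∈ walk

namespace CompPath

/-- The list of links traversed by a computation path, with multiplicity. -/
def links {E : Finset (V × V)} {s t : V} (p : CompPath E s t) : List (V × V) :=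
  p.walk.zip p.walk.tail

end CompPath

/-- `x` is a feasible `s`–`t` flow in the computing network `(E, μE, μV)`:
a nonnegative, finitely supported assignment of values to computation paths such that
every link `e ∈ E` carries (with multiplicity) at most `μE e` total flow and every node
`w` processes at most `μV w` total flow. -/
def IsFlow (E : Finset (V × V)) (μE : V × V → ℝ) (μV : V → ℝ) (s t : V)
    (x : CompPath E s t →₀ ℝ) : Prop :=
  (∀ p, 0 ≤ x p) ∧
  (∀ e ∈ E, ∑ p ∈ x.support, x p * (p.links.count e : ℝ) ≤ μE e) ∧
  (∀ w : V, ∑ p ∈ x.support, (if p.proc = w then x p else 0) ≤ μV w)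

/-- The total value of a flow. -/
def flowValue (E : Finset (V × V)) (s t : V) (x : CompPath E s t →₀ ℝ) : ℝ :=
  ∑ p ∈ x.support, x p

/-- The maximum `s`–`t` flow of the computing network `(E, μE, μV)`. -/
noncomputable def maxFlow (E : Finset (V × V)) (μE : V × V → ℝ) (μV : V → ℝ)
    (s t : V) : ℝ :=
  sSup {F | ∃ x, IsFlow E μE μV s t x ∧ F = flowValue E s t x}

/-- A communication cut for `(s, t)`: a set of links `Ec ⊆ E` such that every
computation path from `s` to `t` whose processing node has positive processing
capacity uses some link of `Ec`. -/
def IsCommCut (E : Finset (V × V)) (μV : V → ℝ) (s t : V) (Ec : Finset (V × V)) : Prop :=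
  Ec ⊆ E ∧ ∀ p : CompPath E s t, 0 < μV p.proc → ∃ e ∈ Ec, e ∈ p.links

/-- A computation cut for `(s, t)`: a set of nodes `Vc` such that every computation
path from `s` to `t` whose processing node has positive processing capacity has its
processing node in `Vc`. -/
def IsCompCut (E : Finset (V × V)) (μV : V → ℝ) (s t : V) (Vc : Finset V) : Prop :=
  ∀ p : CompPath E s t, 0 < μV p.proc → p.proc ∈ Vc

/-- A joint communication and computation cut for `(s, t)`. -/
def IsJointCut (E : Finset (V × V)) (μV : V → ℝ) (s t : V)
    (Ec : Finset (V × V)) (Vc : Finset V) : Prop :=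
  Ec ⊆ E ∧
    ∀ p : CompPath E s t, 0 < μV p.proc → (∃ e ∈ Ec, e ∈ p.links) ∨ p.proc ∈ Vc

/-- The value of a joint cut. -/
def jointCutValue (μE : V × V → ℝ) (μV : V → ℝ) (Ec : Finset (V × V)) (Vc : Finset V) : ℝ :=
  ∑ e ∈ Ec, μE e + ∑ w ∈ Vc, μV w

/-- The minimum value of a joint communication and computation cut for `(s, t)`. -/
noncomputable def minJointCutValue (E : Finset (V × V)) (μE : V × V → ℝ) (μV : V → ℝ)
    (s t : V) : ℝ :=
  sInf {c | ∃ Ec Vc, IsJointCut E μV s t Ec Vc ∧ c = jointCutValue μE μV Ec Vc}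

/-- The edge set of the layered graph of `(V, E)`: a copy of each link in each of the
two layers (`Sum.inl` is the upper layer, `Sum.inr` the lower layer), plus a crossing
edge `(w, w')` for each node `w`. -/
def layerEdges (E : Finset (V × V)) : Finset ((V ⊕ V) × (V ⊕ V)) :=
  (E.image fun e => (Sum.inl e.1, Sum.inl e.2)) ∪
    (E.image fun e => (Sum.inr e.1, Sum.inr e.2)) ∪
    ((univ : Finset V).image fun w => (Sum.inl w, Sum.inr w))

/-- `a` is connected to `b` by a directed path in the layered graph after deleting
the edge set `C`. -/
def LConnected (E : Finset (V × V)) (C : Finset ((V ⊕ V) × (V ⊕ V))) (a b : V ⊕ V) : Prop :=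
  Relation.ReflTransGen (fun u v => (u, v) ∈ layerEdges E \ C) a b

/-- Costs (capacities) of layered-graph edges: each of the two copies of a link
`(u, v)` gets cost `μE (u, v)`, and the crossing edge `(w, w')` gets cost `κ w`. -/
def lcost (μE : V × V → ℝ) (κ : V → ℝ) : (V ⊕ V) × (V ⊕ V) → ℝ
  | (Sum.inl u, Sum.inl v) => μE (u, v)
  | (Sum.inr u, Sum.inr v) => μE (u, v)
  | (Sum.inl u, Sum.inr v) => if u = v then κ u else 0
  | (Sum.inr _, Sum.inl _) => 0

/-- Reachability along directed links of `E`. -/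
def Reach (E : Finset (V × V)) (a b : V) : Prop :=
  Relation.ReflTransGen (fun u v => (u, v) ∈ E) a b


variable {α : Type*}

lemma chain'_zip_mem {R : α → α → Prop} : ∀ l : List α, l.Chain' R →
    ∀ e ∈ l.zip l.tail, R e.1 e.2
  | [], _, e, he => by simp at he
  | [a], _, e, he => by simp at he
  | a :: b :: l, h, e, he => by
    rw [List.Chain', List.isChain_cons_cons] at h
    simp only [List.tail_cons, List.zip_cons_cons, List.mem_cons] at he
    rcases he with rfl | he
    · exact h.1
    · exact chain'_zip_mem (b :: l) h.2 e he

lemma links_split (x : α) : ∀ (a b : List α),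
    (a ++ x :: b).zip (a ++ x :: b).tail =
      (a ++ [x]).zip (a ++ [x]).tail ++ (x :: b).zip (x :: b).tail
  | [], b => by simp
  | [a], b => by simp
  | a :: a' :: l, b => by
    have := links_split x (a' :: l) b
    simp only [List.cons_append, List.tail_cons, List.zip_cons_cons] at this ⊢
    rw [this]

lemma chain'_reach {r : α → α → Prop} : ∀ l : List α, l.Chain' r →
    ∀ a b, l.head? = some a → l.getLast? = some b → Relation.ReflTransGen r a b
  | [], _, a, b, ha, _ => by simp at ha
  | [x], _, a, b, ha, hb => by
    simp at ha hb; subst ha; subst hb; exact Relation.ReflTransGen.refl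
  | x :: y :: l, h, a, b, ha, hb => by
    rw [List.Chain', List.isChain_cons_cons] at h
    simp only [List.head?_cons, Option.some.injEq] at ha
    subst ha
    have hb' : (y :: l).getLast? = some b := by
      rw [List.getLast?_cons_cons] at hb; exact hb
    exact Relation.ReflTransGen.head h.1 (chain'_reach (y :: l) h.2 y b rfl hb')

lemma reach_chain' {r : α → α → Prop} {a b : α} (h : Relation.ReflTransGen r a b) :
    ∃ l : List α, l.Chain' r ∧ l.head? = some a ∧ l.getLast? = some b := by
  induction h with
  | refl => exact ⟨[a], by simp [List.Chain']⟩
  | tail _ hbc ih =>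
    obtain ⟨l, hc, hh, hl⟩ := ih
    rename_i c d _
    refine ⟨l ++ [d], ?_, ?_, by simp⟩
    · rw [List.Chain', List.isChain_append]
      refine ⟨hc, List.isChain_singleton _, ?_⟩
      intro x hx y hy
      simp only [hl, Option.mem_def, Option.some.injEq, List.head?_cons] at hx hy
      subst hx; subst hy; exact hbc
    · cases l with
      | nil => simp at hh
      | cons z l => simpa using hh

lemma mem_layer_ll {E : Finset (V × V)} {u v : V} :
    (Sum.inl u, Sum.inl v) ∈ layerEdges E ↔ (u, v) ∈ E := by
  simp [layerEdges]

lemma mem_layer_rr {E : Finset (V × V)} {u v : V} :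
    (Sum.inr u, Sum.inr v) ∈ layerEdges E ↔ (u, v) ∈ E := by
  simp [layerEdges]

lemma mem_layer_lr {E : Finset (V × V)} {u v : V} :
    (Sum.inl u, Sum.inr v) ∈ layerEdges E ↔ u = v := by
  simp [layerEdges, eq_comm]

lemma mem_layer_rl {E : Finset (V × V)} {u v : V} :
    (Sum.inr u, Sum.inl v) ∉ layerEdges E := by
  simp [layerEdges]

lemma all_inr {E : Finset (V × V)} {C' : Finset ((V ⊕ V) × (V ⊕ V))} :
    ∀ L : List (V ⊕ V), L.Chain' (fun u v => (u, v) ∈ layerEdges E \ C') →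
    ∀ v : V, L.head? = some (Sum.inr v) →
    ∃ B : List V, L = B.map Sum.inr ∧ B.head? = some v
  | [], _, v, hv => by simp at hv
  | (x :: l), h, v, hv => by
    simp only [List.head?_cons, Option.some.injEq] at hv
    subst hv
    cases l with
    | nil => exact ⟨[v], by simp⟩
    | cons y l' =>
      rw [List.Chain', List.isChain_cons_cons] at h
      obtain ⟨h1, h2⟩ := h
      rw [Finset.mem_sdiff] at h1
      obtain ⟨y', rfl⟩ : ∃ y', y = Sum.inr y' := by
        cases y with
        | inl y' => exact absurd h1.1 mem_layer_rl
        | inr y' => exact ⟨y', rfl⟩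
      obtain ⟨B, hB, hBh⟩ := all_inr (Sum.inr y' :: l') h2 y' rfl
      exact ⟨v :: B, by simp [hB], rfl⟩

lemma layer_split {E : Finset (V × V)} {C' : Finset ((V ⊕ V) × (V ⊕ V))} {t : V} :
    ∀ L : List (V ⊕ V), L.Chain' (fun u v => (u, v) ∈ layerEdges E \ C') →
    ∀ s : V, L.head? = some (Sum.inl s) → L.getLast? = some (Sum.inr t) →
    ∃ (A B : List V) (w : V), L = A.map Sum.inl ++ B.map Sum.inr ∧
      A.head? = some s ∧ A.getLast? = some w ∧ B.head? = some w ∧ B.getLast? = some t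
  | [], _, s, hs, _ => by simp at hs
  | [x], _, s, hs, ht => by
    simp only [List.head?_cons, Option.some.injEq] at hs
    simp only [List.getLast?_singleton, Option.some.injEq] at ht
    subst hs; exact absurd ht (by simp)
  | (x :: y :: l), h, s, hs, ht => by
    simp only [List.head?_cons, Option.some.injEq] at hs
    subst hs
    rw [List.Chain', List.isChain_cons_cons] at h
    obtain ⟨h1, h2⟩ := h
    have ht' : (y :: l).getLast? = some (Sum.inr t) := by
      rw [List.getLast?_cons_cons] at ht; exact ht
    cases y with
    | inl s₂ =>
      obtain ⟨A, B, w, hL, hA, hAl, hBh, hBl⟩ := layer_split (Sum.inl s₂ :: l) h2 s₂ rfl ht'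
      have hAne : A ≠ [] := by rintro rfl; simp at hA
      refine ⟨s :: A, B, w, by simp [hL], rfl, ?_, hBh, hBl⟩
      rw [List.getLast?_cons, hAl]; cases A <;> simp_all
    | inr v =>
      rw [Finset.mem_sdiff, mem_layer_lr] at h1
      obtain ⟨rfl, -⟩ := h1
      obtain ⟨B, hB, hBh⟩ := all_inr (Sum.inr s :: l) h2 s rfl
      have hBne : B ≠ [] := by rintro rfl; simp at hBh
      refine ⟨[s], B, s, by simp [hB], rfl, rfl, hBh, ?_⟩
      rw [hB] at ht'
      rw [List.getLast?_map] at ht'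
      cases hBl : B.getLast? with
      | none => rw [hBl] at ht'; simp at ht'
      | some b =>
        rw [hBl] at ht'
        simp only [Option.map_some, Option.some.injEq, Sum.inr.injEq] at ht'
        rw [ht']

lemma chain'_of_zip {α : Type*} {R : α → α → Prop} :
    ∀ l : List α, (∀ e ∈ l.zip l.tail, R e.1 e.2) → l.Chain' R
  | [], _ => List.isChain_nil
  | [a], _ => List.isChain_singleton a
  | a :: b :: l, h => by
    rw [List.Chain', List.isChain_cons_cons]
    refine ⟨h (a, b) (by simp), chain'_of_zip (b :: l) fun e he => h e ?_⟩
    simp only [List.tail_cons, List.zip_cons_cons, List.mem_cons]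
    exact Or.inr he

lemma lcost_nonneg {μE : V × V → ℝ} {κ : V → ℝ} (hμE : ∀ e, 0 ≤ μE e) (hκ : ∀ w, 0 ≤ κ w)
    (q : (V ⊕ V) × (V ⊕ V)) : 0 ≤ lcost μE κ q := by
  obtain ⟨a | a, b | b⟩ := q <;> simp only [lcost] <;> first
    | exact hμE _
    | positivity
    | exact le_refl 0
    | split <;> [exact hκ _; exact le_refl 0]

lemma part1 (E : Finset (V × V)) (μV : V → ℝ) (s t : V)
    (C : Finset ((V ⊕ V) × (V ⊕ V)))
    (hCdisc : ¬ LConnected E C (Sum.inl s) (Sum.inr t)) :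
    IsJointCut E μV s t
        (E.filter fun e => (Sum.inl e.1, Sum.inl e.2) ∈ C ∨ (Sum.inr e.1, Sum.inr e.2) ∈ C)
        (univ.filter fun w => (Sum.inl w, Sum.inr w) ∈ C) := by
  refine ⟨Finset.filter_subset _ _, fun p hproc => ?_⟩
  by_contra hcon
  push_neg at hcon
  obtain ⟨hEc, hVc⟩ := hcon
  simp only [Finset.mem_filter, Finset.mem_univ, true_and] at hVc
  -- decompose walk at proc
  obtain ⟨l₁, l₂, hw⟩ := List.append_of_mem p.proc_mem
  have hchain := p.chain
  rw [hw] at hchain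
  have hlinks : p.links = (l₁ ++ [p.proc]).zip (l₁ ++ [p.proc]).tail ++
      (p.proc :: l₂).zip (p.proc :: l₂).tail := by
    rw [CompPath.links, hw]; exact links_split _ _ _
  have hmemE : ∀ e ∈ p.links, e ∈ E := by
    intro e he
    have := chain'_zip_mem p.walk p.chain e he
    exact this
  have hnotC : ∀ e ∈ p.links, (Sum.inl e.1, Sum.inl e.2) ∉ C ∧ (Sum.inr e.1, Sum.inr e.2) ∉ C := by
    intro e he
    constructor <;> intro hc
    · exact hEc e (Finset.mem_filter.mpr ⟨hmemE e he, Or.inl hc⟩) he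
    · exact hEc e (Finset.mem_filter.mpr ⟨hmemE e he, Or.inr hc⟩) he
  -- upper path from s to proc
  set P := l₁ ++ [p.proc] with hP
  set Q := p.proc :: l₂ with hQ
  have hPlinks : ∀ e ∈ P.zip P.tail, e ∈ p.links := by
    intro e he; rw [hlinks]; exact List.mem_append_left _ he
  have hQlinks : ∀ e ∈ Q.zip Q.tail, e ∈ p.links := by
    intro e he; rw [hlinks]; exact List.mem_append_right _ he
  have hPhead : P.head? = some s := by
    have := p.head_eq
    rw [hw] at this
    rw [hP]
    cases l₁ with
    | nil => rw [hQ] at this; simpa using this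
    | cons a l => simpa using this
  have hPlast : P.getLast? = some p.proc := List.getLast?_concat
  have hQhead : Q.head? = some p.proc := rfl
  have hQlast : Q.getLast? = some t := by
    have := p.last_eq
    rw [hw] at this
    rw [hQ]
    rw [show l₁ ++ p.proc :: l₂ = l₁ ++ (p.proc :: l₂) from rfl, List.getLast?_append] at this
    simpa using this
  have hreach1 : LConnected E C (Sum.inl s) (Sum.inl p.proc) := by
    have hc : P.Chain' (fun u v => (Sum.inl u, Sum.inl v) ∈ layerEdges E \ C) := by
      apply chain'_of_zip
      intro e he
      rw [Finset.mem_sdiff, mem_layer_ll]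
      exact ⟨hmemE e (hPlinks e he), (hnotC e (hPlinks e he)).1⟩
    have := chain'_reach P hc s p.proc hPhead hPlast
    exact Relation.ReflTransGen.lift Sum.inl (fun a b h => h) _ _ this
  have hreach2 : LConnected E C (Sum.inr p.proc) (Sum.inr t) := by
    have hc : Q.Chain' (fun u v => (Sum.inr u, Sum.inr v) ∈ layerEdges E \ C) := by
      apply chain'_of_zip
      intro e he
      rw [Finset.mem_sdiff, mem_layer_rr]
      exact ⟨hmemE e (hQlinks e he), (hnotC e (hQlinks e he)).2⟩
    have := chain'_reach Q hc p.proc t hQhead hQlast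
    exact Relation.ReflTransGen.lift Sum.inr (fun a b h => h) _ _ this
  have hcross : ((Sum.inl p.proc : V ⊕ V), (Sum.inr p.proc : V ⊕ V)) ∈ layerEdges E \ C := by
    rw [Finset.mem_sdiff, mem_layer_lr]
    exact ⟨rfl, hVc⟩
  exact hCdisc (hreach1.trans (Relation.ReflTransGen.head hcross hreach2))

lemma part2a (E : Finset (V × V)) (μV : V → ℝ) (s t : V) (Ec : Finset (V × V)) (Vc : Finset V)
    (hμV : ∀ w, 0 ≤ μV w) (hJC : IsJointCut E μV s t Ec Vc) :
    ¬ LConnected E ((Ec.image fun e => ((Sum.inl e.1 : V ⊕ V), (Sum.inl e.2 : V ⊕ V))) ∪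
        (Ec.image fun e => ((Sum.inr e.1 : V ⊕ V), (Sum.inr e.2 : V ⊕ V))) ∪
        ((univ.filter fun w => w ∈ Vc ∨ μV w = 0).image fun w => ((Sum.inl w : V ⊕ V), Sum.inr w)))
      (Sum.inl s) (Sum.inr t) := by
  set C' := (Ec.image fun e => ((Sum.inl e.1 : V ⊕ V), (Sum.inl e.2 : V ⊕ V))) ∪
        (Ec.image fun e => ((Sum.inr e.1 : V ⊕ V), (Sum.inr e.2 : V ⊕ V))) ∪
        ((univ.filter fun w => w ∈ Vc ∨ μV w = 0).image fun w => ((Sum.inl w : V ⊕ V), Sum.inr w))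
    with hC'
  have memll : ∀ u v : V, ((Sum.inl u, Sum.inl v) ∈ C') ↔ (u, v) ∈ Ec := by
    intro u v
    simp [hC', Prod.ext_iff, and_assoc]
  have memrr : ∀ u v : V, ((Sum.inr u, Sum.inr v) ∈ C') ↔ (u, v) ∈ Ec := by
    intro u v
    simp [hC', Prod.ext_iff, and_assoc]
  have memlr : ∀ u v : V, ((Sum.inl u, Sum.inr v) ∈ C') ↔ u = v ∧ (u ∈ Vc ∨ μV u = 0) := by
    intro u v
    simp only [hC', Finset.mem_union, Finset.mem_image, Finset.mem_filter, Finset.mem_univ,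
      true_and, Prod.ext_iff]
    constructor
    · rintro ((⟨e, he, h1, h2⟩ | ⟨e, he, h1, h2⟩) | ⟨w, hw, h1, h2⟩)
      · exact absurd h2 (by simp)
      · exact absurd h1 (by simp)
      · cases Sum.inl.inj h1; cases Sum.inr.inj h2; exact ⟨rfl, hw⟩
    · rintro ⟨rfl, hw⟩
      exact Or.inr ⟨u, hw, rfl, rfl⟩
  intro hconn
  obtain ⟨L, hLc, hLh, hLl⟩ := reach_chain' hconn
  obtain ⟨A, B, w, hL, hA, hAl, hBh, hBl⟩ := layer_split L hLc s hLh hLl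
  rw [hL] at hLc
  rw [List.Chain', List.isChain_append] at hLc
  obtain ⟨hAc, hBc, hjun⟩ := hLc
  -- crossing edge survives
  have hcross : ((Sum.inl w : V ⊕ V), (Sum.inr w : V ⊕ V)) ∈ layerEdges E \ C' := by
    apply hjun
    · rw [List.getLast?_map, hAl]; rfl
    · rw [List.head?_map, hBh]; rfl
  have hwVc : w ∉ Vc ∧ μV w ≠ 0 := by
    rw [Finset.mem_sdiff, memlr] at hcross
    have := hcross.2
    push_neg at this
    exact this rfl
  -- chains on V
  rw [List.isChain_map] at hAc hBc
  have hAchain : A.Chain' (fun u v => (u, v) ∈ E ∧ (u, v) ∉ Ec) := by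
    refine hAc.imp fun a b h => ?_
    rw [Finset.mem_sdiff, mem_layer_ll, memll] at h
    exact h
  have hBchain : B.Chain' (fun u v => (u, v) ∈ E ∧ (u, v) ∉ Ec) := by
    refine hBc.imp fun a b h => ?_
    rw [Finset.mem_sdiff, mem_layer_rr, memrr] at h
    exact h
  obtain ⟨A₀, hA₀⟩ := List.getLast?_eq_some_iff.mp hAl
  obtain ⟨B₀, hB₀⟩ := List.head?_eq_some_iff.mp hBh
  have hAne : A ≠ [] := by rw [hA₀]; simp
  -- build the computation path
  have hBtail : B₀.Chain' (fun u v => (u, v) ∈ E ∧ (u, v) ∉ Ec) := by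
    have := hBchain; rw [hB₀] at this; exact List.IsChain.tail this
  have hjun2 : ∀ y ∈ B₀.head?, (w, y) ∈ E ∧ (w, y) ∉ Ec := by
    have := hBchain; rw [hB₀, List.Chain', List.isChain_cons] at this; exact this.1
  have hBllast : B₀ = [] → w = t := by
    intro h; rw [hB₀, h] at hBl; simpa using hBl
  have hB₀last : B₀ ≠ [] → B₀.getLast? = some t := by
    intro h
    rw [hB₀, show w :: B₀ = [w] ++ B₀ from rfl, List.getLast?_append] at hBl
    obtain ⟨b, hb⟩ := Option.isSome_iff_exists.mp (List.getLast?_isSome.mpr h)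
    rw [hb] at hBl ⊢
    simpa using hBl
  refine absurd (hJC.2 ⟨A ++ B₀, w, ?_, ?_, ?_, ?_, ?_⟩ ?_) ?_
  · simp [hAne]
  · rw [List.head?_append, hA]; rfl
  · rcases eq_or_ne B₀ [] with h | h
    · rw [h, List.append_nil, hAl, hBllast h]
    · rw [List.getLast?_append]
      rw [hB₀last h]; rfl
  · rw [List.Chain', List.isChain_append]
    exact ⟨List.IsChain.imp (fun a b h => h.1) hAchain, List.IsChain.imp (fun a b h => h.1) hBtail,
      fun x hx y hy => by
        rw [hAl, Option.mem_def, Option.some.injEq] at hx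
        subst hx
        exact (hjun2 y hy).1⟩
  · exact List.mem_append_left _ (by rw [hA₀]; simp)
  · exact lt_of_le_of_ne (hμV w) (Ne.symm hwVc.2)
  · intro hcase
    rcases hcase with ⟨e, heEc, helinks⟩ | hwVc'
    · rw [CompPath.links] at helinks
      simp only at helinks
      rw [show A ++ B₀ = A₀ ++ w :: B₀ by rw [hA₀]; simp, links_split] at helinks
      rw [← hA₀] at helinks
      rcases List.mem_append.mp helinks with h | h
      · exact (chain'_zip_mem A hAchain e h).2 heEc
      · have : (w :: B₀).Chain' (fun u v => (u, v) ∈ E ∧ (u, v) ∉ Ec) := by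
          rw [← hB₀]; exact hBchain
        exact (chain'_zip_mem _ this e h).2 heEc
    · exact hwVc.1 hwVc'

lemma part2b (E : Finset (V × V)) (μE : V × V → ℝ) (μV : V → ℝ)
    (hμE : ∀ e, 0 ≤ μE e) (hμV : ∀ w, 0 ≤ μV w) (Ec : Finset (V × V)) (Vc : Finset V) :
    ∑ q ∈ ((Ec.image fun e => ((Sum.inl e.1 : V ⊕ V), (Sum.inl e.2 : V ⊕ V))) ∪
        (Ec.image fun e => ((Sum.inr e.1 : V ⊕ V), (Sum.inr e.2 : V ⊕ V))) ∪
        ((univ.filter fun w => w ∈ Vc ∨ μV w = 0).image fun w =>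
          ((Sum.inl w : V ⊕ V), Sum.inr w))), lcost μE μV q ≤
      2 * jointCutValue μE μV Ec Vc := by
  have hUL : Disjoint (Ec.image fun e => ((Sum.inl e.1 : V ⊕ V), (Sum.inl e.2 : V ⊕ V)))
      (Ec.image fun e => ((Sum.inr e.1 : V ⊕ V), (Sum.inr e.2 : V ⊕ V))) := by
    rw [Finset.disjoint_left]
    rintro a ha hb
    simp only [Finset.mem_image] at ha hb
    obtain ⟨e, -, rfl⟩ := ha
    obtain ⟨e', -, he'⟩ := hb
    simp [Prod.ext_iff] at he'
  have hX : Disjoint ((Ec.image fun e => ((Sum.inl e.1 : V ⊕ V), (Sum.inl e.2 : V ⊕ V))) ∪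
      (Ec.image fun e => ((Sum.inr e.1 : V ⊕ V), (Sum.inr e.2 : V ⊕ V))))
      ((univ.filter fun w => w ∈ Vc ∨ μV w = 0).image fun w =>
        ((Sum.inl w : V ⊕ V), Sum.inr w)) := by
    rw [Finset.disjoint_left]
    rintro a ha hb
    simp only [Finset.mem_union, Finset.mem_image] at ha hb
    obtain ⟨w, -, rfl⟩ := hb
    rcases ha with ⟨e, -, he⟩ | ⟨e, -, he⟩ <;> simp [Prod.ext_iff] at he
  rw [Finset.sum_union hX, Finset.sum_union hUL]
  have h1 : ∑ q ∈ Ec.image (fun e => ((Sum.inl e.1 : V ⊕ V), (Sum.inl e.2 : V ⊕ V))),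
      lcost μE μV q = ∑ e ∈ Ec, μE e := by
    rw [Finset.sum_image (by rintro ⟨a, b⟩ - ⟨c, d⟩ - h; simpa [Prod.ext_iff] using h)]
    exact Finset.sum_congr rfl fun e _ => by simp [lcost]
  have h2 : ∑ q ∈ Ec.image (fun e => ((Sum.inr e.1 : V ⊕ V), (Sum.inr e.2 : V ⊕ V))),
      lcost μE μV q = ∑ e ∈ Ec, μE e := by
    rw [Finset.sum_image (by rintro ⟨a, b⟩ - ⟨c, d⟩ - h; simpa [Prod.ext_iff] using h)]
    exact Finset.sum_congr rfl fun e _ => by simp [lcost]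
  have h3 : ∑ q ∈ (univ.filter fun w => w ∈ Vc ∨ μV w = 0).image
      (fun w => ((Sum.inl w : V ⊕ V), Sum.inr w)), lcost μE μV q ≤ ∑ w ∈ Vc, μV w := by
    rw [Finset.sum_image (by intro a _ b _ h; simpa [Prod.ext_iff] using h)]
    have : ∑ w ∈ univ.filter (fun w => w ∈ Vc ∨ μV w = 0),
        lcost μE μV (Sum.inl w, Sum.inr w) =
        ∑ w ∈ univ.filter (fun w => w ∈ Vc ∨ μV w = 0), μV w := by
      apply Finset.sum_congr rfl
      intro w _
      simp [lcost]
    rw [this]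
    rw [← Finset.sum_filter_add_sum_filter_not _ (fun w => w ∈ Vc)]
    have hz : ∑ w ∈ (univ.filter fun w => w ∈ Vc ∨ μV w = 0).filter (fun w => w ∉ Vc),
        μV w = 0 := by
      apply Finset.sum_eq_zero
      intro w hw
      simp only [Finset.mem_filter, Finset.mem_univ, true_and] at hw
      rcases hw.1 with h | h
      · exact absurd h hw.2
      · exact h
    rw [hz, add_zero]
    apply Finset.sum_le_sum_of_subset_of_nonneg
    · intro w hw
      simp only [Finset.mem_filter] at hw
      exact hw.2
    · intro w _ _; exact hμV w
  rw [h1, h2, jointCutValue]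
  linarith [Finset.sum_nonneg (fun e (_ : e ∈ Ec) => hμE e),
    Finset.sum_nonneg (fun w (_ : w ∈ Vc) => hμV w)]

lemma part2c (E : Finset (V × V)) (μE : V × V → ℝ) (μV : V → ℝ)
    (hμE : ∀ e, 0 ≤ μE e) (hμV : ∀ w, 0 ≤ μV w)
    (C : Finset ((V ⊕ V) × (V ⊕ V))) :
    jointCutValue μE μV
        (E.filter fun e => (Sum.inl e.1, Sum.inl e.2) ∈ C ∨ (Sum.inr e.1, Sum.inr e.2) ∈ C)
        (univ.filter fun w => (Sum.inl w, Sum.inr w) ∈ C) ≤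
      ∑ q ∈ C, lcost μE μV q := by
  set Ec' := E.filter fun e => (Sum.inl e.1, Sum.inl e.2) ∈ C ∨ (Sum.inr e.1, Sum.inr e.2) ∈ C
    with hEc'
  set Vc' := univ.filter fun w => (Sum.inl w, Sum.inr w) ∈ C with hVc'
  set f : V × V → (V ⊕ V) × (V ⊕ V) := fun e =>
    if (Sum.inl e.1, Sum.inl e.2) ∈ C then ((Sum.inl e.1 : V ⊕ V), (Sum.inl e.2 : V ⊕ V))
    else ((Sum.inr e.1 : V ⊕ V), (Sum.inr e.2 : V ⊕ V)) with hf
  have hfinj : ∀ e₁ ∈ Ec', ∀ e₂ ∈ Ec', f e₁ = f e₂ → e₁ = e₂ := by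
    intro e₁ _ e₂ _ h
    rw [hf] at h
    simp only at h
    split_ifs at h <;> simpa [Prod.ext_iff] using h
  have h1 : ∑ e ∈ Ec', μE e = ∑ q ∈ Ec'.image f, lcost μE μV q := by
    rw [Finset.sum_image hfinj]
    apply Finset.sum_congr rfl
    intro e _
    rw [hf]
    simp only
    split_ifs <;> simp [lcost]
  have h2 : ∑ w ∈ Vc', μV w = ∑ q ∈ Vc'.image (fun w => ((Sum.inl w : V ⊕ V), Sum.inr w)),
      lcost μE μV q := by
    rw [Finset.sum_image (by intro a _ b _ h; simpa [Prod.ext_iff] using h)]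
    apply Finset.sum_congr rfl
    intro w _
    simp [lcost]
  have hdisj : Disjoint (Ec'.image f) (Vc'.image (fun w => ((Sum.inl w : V ⊕ V), Sum.inr w))) := by
    rw [Finset.disjoint_left]
    rintro a ha hb
    simp only [Finset.mem_image] at ha hb
    obtain ⟨w, -, rfl⟩ := hb
    obtain ⟨e, -, he⟩ := ha
    rw [hf] at he
    simp only at he
    split_ifs at he <;> simp [Prod.ext_iff] at he
  have hsub : Ec'.image f ∪ Vc'.image (fun w => ((Sum.inl w : V ⊕ V), Sum.inr w)) ⊆ C := by
    apply Finset.union_subset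
    · intro q hq
      simp only [Finset.mem_image] at hq
      obtain ⟨e, he, rfl⟩ := hq
      rw [hEc', Finset.mem_filter] at he
      rw [hf]
      simp only
      split_ifs with h
      · exact h
      · rcases he.2 with h' | h'
        · exact absurd h' h
        · exact h'
    · intro q hq
      simp only [Finset.mem_image] at hq
      obtain ⟨w, hw, rfl⟩ := hq
      rw [hVc', Finset.mem_filter] at hw
      exact hw.2
  rw [jointCutValue, h1, h2, ← Finset.sum_union hdisj]
  exact Finset.sum_le_sum_of_subset_of_nonneg hsub
    (fun q _ _ => lcost_nonneg hμE hμV q)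
/-- In the layered graph give each copy of a link `(u,v)` cost
`μE (u,v)` and each crossing edge `(w,w')` cost `μV w`. If `C` is a minimum-cost set
of layered edges disconnecting `s` from `t'`, then
`(E_c, V_c) = ({(u,v) ∈ E : (u,v) ∈ C or (u',v') ∈ C}, {w : (w,w') ∈ C})` is a joint
communication and computation cut for `(s, t)` of value at most twice the minimum
joint cut value. -/
theorem approx_joint_cut (E : Finset (V × V)) (μE : V × V → ℝ) (μV : V → ℝ)
    (hμE : ∀ e, 0 ≤ μE e) (hμV : ∀ w, 0 ≤ μV w) (s t : V)
    (C : Finset ((V ⊕ V) × (V ⊕ V))) (hCsub : C ⊆ layerEdges E)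
    (hCdisc : ¬ LConnected E C (Sum.inl s) (Sum.inr t))
    (hCmin : ∀ C' ⊆ layerEdges E, ¬ LConnected E C' (Sum.inl s) (Sum.inr t) →
      ∑ q ∈ C, lcost μE μV q ≤ ∑ q ∈ C', lcost μE μV q) :
    IsJointCut E μV s t
        (E.filter fun e => (Sum.inl e.1, Sum.inl e.2) ∈ C ∨ (Sum.inr e.1, Sum.inr e.2) ∈ C)
        (univ.filter fun w => (Sum.inl w, Sum.inr w) ∈ C) ∧
      jointCutValue μE μV
          (E.filter fun e => (Sum.inl e.1, Sum.inl e.2) ∈ C ∨ (Sum.inr e.1, Sum.inr e.2) ∈ C)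
          (univ.filter fun w => (Sum.inl w, Sum.inr w) ∈ C) ≤
        2 * minJointCutValue E μE μV s t := by
  refine ⟨part1 E μV s t C hCdisc, ?_⟩
  have hne : {c | ∃ Ec Vc, IsJointCut E μV s t Ec Vc ∧
      c = jointCutValue μE μV Ec Vc}.Nonempty :=
    ⟨jointCutValue μE μV E univ, E, univ,
      ⟨Finset.Subset.refl E, fun p _ => Or.inr (Finset.mem_univ _)⟩, rfl⟩
  have key : ∀ c ∈ {c | ∃ Ec Vc, IsJointCut E μV s t Ec Vc ∧
      c = jointCutValue μE μV Ec Vc},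
      jointCutValue μE μV
        (E.filter fun e => (Sum.inl e.1, Sum.inl e.2) ∈ C ∨ (Sum.inr e.1, Sum.inr e.2) ∈ C)
        (univ.filter fun w => (Sum.inl w, Sum.inr w) ∈ C) / 2 ≤ c := by
    rintro c ⟨Ec, Vc, hJC, rfl⟩
    set C' := (Ec.image fun e => ((Sum.inl e.1 : V ⊕ V), (Sum.inl e.2 : V ⊕ V))) ∪
        (Ec.image fun e => ((Sum.inr e.1 : V ⊕ V), (Sum.inr e.2 : V ⊕ V))) ∪
        ((univ.filter fun w => w ∈ Vc ∨ μV w = 0).image fun w =>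
          ((Sum.inl w : V ⊕ V), Sum.inr w)) with hC'
    have hC'sub : C' ⊆ layerEdges E := by
      rw [hC']
      apply Finset.union_subset
      apply Finset.union_subset
      · intro q hq
        simp only [Finset.mem_image] at hq
        obtain ⟨e, he, rfl⟩ := hq
        exact mem_layer_ll.mpr (hJC.1 he)
      · intro q hq
        simp only [Finset.mem_image] at hq
        obtain ⟨e, he, rfl⟩ := hq
        exact mem_layer_rr.mpr (hJC.1 he)
      · intro q hq
        simp only [Finset.mem_image] at hq
        obtain ⟨w, -, rfl⟩ := hq
        exact mem_layer_lr.mpr rfl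
    have hmin := hCmin C' hC'sub (part2a E μV s t Ec Vc hμV hJC)
    have h1 := part2c E μE μV hμE hμV C
    have h2 := part2b E μE μV hμE hμV Ec Vc
    rw [hC'] at hmin
    linarith
  rw [minJointCutValue]
  have := le_csInf hne key
  linarith
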